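/- arXiv:2504.05546 — 2 statements merged into one kernel-verified Lean document; each statement's English description precedes it below -/
import Mathlib

section
/- Let I ⊂ (0,∞) be an open interval and let f : I → (0,∞) be twice continuously differentiable and satisfy (f^m)''(ξ) + ((N-1)/ξ)(f^m)'(ξ) − α f(ξ) + β ξ f'(ξ) + ξ^σ f(ξ)^p = 0 on I. Define X(ξ) := (m/α) ξ^{-2} f(ξ)^{m-1}, Y(ξ) := (m/α) ξ^{-1} f(ξ)^{m-2} f'(ξ), Z(ξ) := (1/α) ξ^σ f(ξ)^{p-1}. Then for all ξ ∈ I: X'(ξ) = (α/m) ξ f(ξ)^{1-m} · X(ξ)[(m-1)Y(ξ) − 2X(ξ)], Y'(ξ) = (α/m) ξ f(ξ)^{1-m} · [−Y(ξ)² − (β/α)Y(ξ) + X(ξ) − N X(ξ)Y(ξ) − X(ξ)Z(ξ)], and Z'(ξ) = (α/m) ξ f(ξ)^{1-m} · Z(ξ)[(p-1)Y(ξ) + σ X(ξ)]. -/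
set_option maxHeartbeats 1000000


open Set

/-- The change of variables
`X = (m/α) ξ^{-2} f^{m-1}`, `Y = (m/α) ξ^{-1} f^{m-2} f'`, `Z = (1/α) ξ^σ f^{p-1}`
transforms the self-similar profile ODE into the autonomous dynamical system
`Ẋ = X[(m-1)Y - 2X]`, `Ẏ = -Y² - (β/α)Y + X - NXY - XZ`, `Ż = Z[(p-1)Y + σX]`,
where the new independent variable `η` satisfies `dη/dξ = (α/m) ξ f^{1-m}`. -/
theorem stmt_8 {N : ℕ} (hN : 1 ≤ N) (m p σ L α β : ℝ)
    (hm : 1 < m) (hp1 : 1 < p) (hpm : p < m)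
    (hσl : max (-(N : ℝ)) (-2) < σ) (hσu : σ < -(2 * (p - 1)) / (m - 1))
    (hL : L = σ * (m - 1) + 2 * (p - 1)) (hLneg : L < 0)
    (hα : α = -(σ + 2) / L) (hβ : β = -(m - p) / L)
    (I : Set ℝ) (hIopen : IsOpen I) (hIconn : I.OrdConnected) (hIpos : I ⊆ Ioi 0)
    (f : ℝ → ℝ) (hfpos : ∀ ξ ∈ I, 0 < f ξ) (hf : ContDiffOn ℝ 2 f I)
    (hode : ∀ ξ ∈ I,
      deriv (deriv (fun s => f s ^ m)) ξ + ((N - 1 : ℝ) / ξ) * deriv (fun s => f s ^ m) ξ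
        - α * f ξ + β * ξ * deriv f ξ + ξ ^ σ * f ξ ^ p = 0)
    (X Y Z : ℝ → ℝ)
    (hX : ∀ s, X s = m / α * (f s) ^ (m - 1) / s ^ 2)
    (hY : ∀ s, Y s = m / α * (f s) ^ (m - 2) * deriv f s / s)
    (hZ : ∀ s, Z s = 1 / α * s ^ σ * (f s) ^ (p - 1)) :
    ∀ ξ ∈ I,
      HasDerivAt X (α / m * ξ * (f ξ) ^ (1 - m) *
        (X ξ * ((m - 1) * Y ξ - 2 * X ξ))) ξ ∧
      HasDerivAt Y (α / m * ξ * (f ξ) ^ (1 - m) *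
        (-(Y ξ) ^ 2 - β / α * Y ξ + X ξ - N * X ξ * Y ξ - X ξ * Z ξ)) ξ ∧
      HasDerivAt Z (α / m * ξ * (f ξ) ^ (1 - m) *
        (Z ξ * ((p - 1) * Y ξ + σ * X ξ))) ξ := by
  intro ξ hξ
  have hξ0 : (0:ℝ) < ξ := hIpos hξ
  have hξne : ξ ≠ 0 := ne_of_gt hξ0
  have ha0 : 0 < f ξ := hfpos ξ hξ
  have hane : f ξ ≠ 0 := ne_of_gt ha0
  have hσ2 : -2 < σ := lt_of_le_of_lt (le_max_right _ _) hσl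
  have hαpos : 0 < α := by
    rw [hα]; exact div_pos_of_neg_of_neg (by linarith) hLneg
  have hαne : α ≠ 0 := ne_of_gt hαpos
  have hmne : m ≠ 0 := by linarith
  -- differentiability facts
  have hfd : ∀ s ∈ I, HasDerivAt f (deriv f s) s := fun s hs =>
    (((hf.contDiffAt (hIopen.mem_nhds hs)).differentiableAt (by norm_num)).hasDerivAt)
  have hf1 : ContDiffOn ℝ 1 (deriv f) I := hf.deriv_of_isOpen hIopen (by norm_num)
  have hfd2 : HasDerivAt (deriv f) (deriv (deriv f) ξ) ξ :=
    ((hf1.contDiffAt (hIopen.mem_nhds hξ)).differentiableAt (by norm_num)).hasDerivAt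
  -- derivative of f^m on I
  have hfm : ∀ s ∈ I, HasDerivAt (fun t => f t ^ m) (deriv f s * m * f s ^ (m-1)) s :=
    fun s hs => (hfd s hs).rpow_const (Or.inr hm.le)
  have hev : deriv (fun t => f t ^ m) =ᶠ[nhds ξ] fun s => deriv f s * m * f s ^ (m-1) := by
    filter_upwards [hIopen.mem_nhds hξ] with s hs
    exact (hfm s hs).deriv
  -- derivatives of rpow components at ξ
  have hpow1 : HasDerivAt (fun s => f s ^ (m-1)) (deriv f ξ * (m-1) * f ξ ^ (m-2)) ξ := by
    have h := (hfd ξ hξ).rpow_const (p := m-1) (Or.inl hane)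
    convert h using 2; ring_nf
  have hpow2 : HasDerivAt (fun s => f s ^ (m-2)) (deriv f ξ * (m-2) * f ξ ^ (m-3)) ξ := by
    have h := (hfd ξ hξ).rpow_const (p := m-2) (Or.inl hane)
    convert h using 2; ring_nf
  have hpow3 : HasDerivAt (fun s => f s ^ (p-1)) (deriv f ξ * (p-1) * f ξ ^ (p-2)) ξ := by
    have h := (hfd ξ hξ).rpow_const (p := p-1) (Or.inl hane)
    convert h using 2; ring_nf
  have hpowσ : HasDerivAt (fun s : ℝ => s ^ σ) (σ * ξ ^ (σ-1)) ξ :=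
    Real.hasDerivAt_rpow_const (Or.inl hξne)
  have hgd : HasDerivAt (fun s => deriv f s * m * f s ^ (m-1))
      ((deriv (deriv f) ξ * m) * f ξ ^ (m-1)
        + (deriv f ξ * m) * (deriv f ξ * (m-1) * f ξ ^ (m-2))) ξ :=
    (hfd2.mul_const m).mul hpow1
  have hd2 : deriv (deriv (fun t => f t ^ m)) ξ
      = (deriv (deriv f) ξ * m) * f ξ ^ (m-1)
        + (deriv f ξ * m) * (deriv f ξ * (m-1) * f ξ ^ (m-2)) :=
    (hgd.congr_of_eventuallyEq hev).deriv
  have hd1 : deriv (fun t => f t ^ m) ξ = deriv f ξ * m * f ξ ^ (m-1) := (hfm ξ hξ).deriv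
  have E := hode ξ hξ
  rw [hd2, hd1] at E
  -- rpow relations
  have e1 : f ξ ^ (m-1) = f ξ ^ (m-3) * f ξ * f ξ := by
    rw [← Real.rpow_add_one hane, ← Real.rpow_add_one hane]; congr 1; ring
  have e2 : f ξ ^ (m-2) = f ξ ^ (m-3) * f ξ := by
    rw [← Real.rpow_add_one hane]; congr 1; ring
  have e3 : f ξ ^ (1-m) = (f ξ ^ (m-3) * f ξ * f ξ)⁻¹ := by
    rw [← e1, show (1-m) = -(m-1) by ring, Real.rpow_neg ha0.le]
  have e4 : f ξ ^ p = f ξ ^ (p-2) * f ξ * f ξ := by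
    rw [← Real.rpow_add_one hane, ← Real.rpow_add_one hane]; congr 1; ring
  have e5 : f ξ ^ (p-1) = f ξ ^ (p-2) * f ξ := by
    rw [← Real.rpow_add_one hane]; congr 1; ring
  have e6 : ξ ^ σ = ξ ^ (σ-1) * ξ := by
    rw [← Real.rpow_add_one hξne]; congr 1; ring
  have hQ0 : f ξ ^ (m-3) ≠ 0 := (Real.rpow_pos_of_pos ha0 _).ne'
  have hR0 : f ξ ^ (p-2) ≠ 0 := (Real.rpow_pos_of_pos ha0 _).ne'
  have hS0 : ξ ^ (σ-1) ≠ 0 := (Real.rpow_pos_of_pos hξ0 _).ne'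
  rw [e1, e2, e4, e6] at E
  have hmQ : m * (f ξ ^ (m-3) * f ξ * f ξ) ≠ 0 :=
    mul_ne_zero hmne (mul_ne_zero (mul_ne_zero hQ0 hane) hane)
  have hcc : deriv (deriv f) ξ =
      (α * f ξ - β * ξ * deriv f ξ - ξ ^ (σ-1) * ξ * (f ξ ^ (p-2) * f ξ * f ξ)
        - ((N:ℝ) - 1)/ξ * (deriv f ξ * m * (f ξ ^ (m-3) * f ξ * f ξ))
        - deriv f ξ * m * (deriv f ξ * (m-1) * (f ξ ^ (m-3) * f ξ)))
      / (m * (f ξ ^ (m-3) * f ξ * f ξ)) := by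
    rw [eq_div_iff hmQ]; linear_combination E
  refine ⟨?_, ?_, ?_⟩
  · -- X
    have hn : HasDerivAt (fun s => m / α * f s ^ (m-1))
        (m / α * (deriv f ξ * (m-1) * f ξ ^ (m-2))) ξ := hpow1.const_mul (m/α)
    have hdd : HasDerivAt (fun s : ℝ => s ^ 2) (2 * ξ) ξ := by
      simpa using hasDerivAt_pow 2 ξ
    have hder := hn.div hdd (pow_ne_zero 2 hξne)
    have hXf : X = fun s => m / α * f s ^ (m-1) / s ^ 2 := funext hX
    rw [hX ξ, hY ξ, hXf]
    convert hder using 1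
    · rfl
    · rfl
    · rfl
    rw [e1, e2, e3]
    field_simp
  · -- Y
    have hn : HasDerivAt (fun s => m / α * f s ^ (m-2) * deriv f s)
        ((m / α * (deriv f ξ * (m-2) * f ξ ^ (m-3))) * deriv f ξ
          + (m / α * f ξ ^ (m-2)) * deriv (deriv f) ξ) ξ :=
      (hpow2.const_mul (m/α)).mul hfd2
    have hder := hn.div (hasDerivAt_id ξ) hξne
    have hYf : Y = fun s => m / α * f s ^ (m-2) * deriv f s / s := funext hY
    rw [hX ξ, hY ξ, hZ ξ, hYf]
    convert hder using 1
    · rfl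
    · rfl
    · rfl
    rw [e1, e2, e3, e5, e6, hcc]
    simp only [id_eq]
    field_simp
    ring
  · -- Z
    have hn : HasDerivAt (fun s : ℝ => 1 / α * s ^ σ)
        (1 / α * (σ * ξ ^ (σ-1))) ξ := hpowσ.const_mul (1/α)
    have hder := hn.mul hpow3
    have hZf : Z = fun s => 1 / α * s ^ σ * f s ^ (p-1) := funext hZ
    rw [hX ξ, hY ξ, hZ ξ, hZf]
    convert hder using 1
    · rfl
    · rfl
    · rfl
    rw [e1, e2, e3, e5, e6]
    field_simp
    ring
end

section
/- Let b > 0 and q > 0 be real numbers. There exists a maximal solution (Y, W) : (η_-, η_+) → ℝ² (with −∞ ≤ η_- < η_+ ≤ ∞) of the planar system Y' = −Y² − bY − W, W' = qYW, such that W(η) > 0 for all η ∈ (η_-, η_+), Y(η) → +∞ as η → η_-^+, and Y(η) → −∞ as η → η_+^-. -/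
open Filter Topology Set

namespace Stmt12Aux

/-- Linear upper bound from a derivative bound. -/
lemma le_linear_of_deriv_le {g d : ℝ → ℝ} {a b m : ℝ}
    (hg : ∀ t ∈ Icc a b, HasDerivAt g (d t) t)
    (hd : ∀ t ∈ Icc a b, d t ≤ m) :
    ∀ t ∈ Icc a b, g t ≤ g a + m * (t - a) := by
  intro t ht
  have hab : a ≤ b := le_trans ht.1 ht.2
  have hD : ∀ s ∈ Icc a b, HasDerivAt (fun x => g x - m * x) (d s - m) s := by
    intro s hs
    have := (hg s hs).sub ((hasDerivAt_id' s).const_mul m)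
    rwa [mul_one] at this
  have key : AntitoneOn (fun s => g s - m * s) (Icc a b) := by
    apply antitoneOn_of_deriv_nonpos (convex_Icc a b)
    · exact fun s hs => ((hD s hs).continuousAt).continuousWithinAt
    · intro s hs
      rw [interior_Icc] at hs
      exact (hD s (Ioo_subset_Icc_self hs)).differentiableAt.differentiableWithinAt
    · intro s hs
      rw [interior_Icc] at hs
      rw [(hD s (Ioo_subset_Icc_self hs)).deriv]
      have := hd s (Ioo_subset_Icc_self hs)
      linarith
  have := key (left_mem_Icc.2 hab) ht ht.1
  simp only at this
  linarith

lemma ge_linear_of_deriv_ge {g d : ℝ → ℝ} {a b m : ℝ}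
    (hg : ∀ t ∈ Icc a b, HasDerivAt g (d t) t)
    (hd : ∀ t ∈ Icc a b, m ≤ d t) :
    ∀ t ∈ Icc a b, g a + m * (t - a) ≤ g t := by
  intro t ht
  have := le_linear_of_deriv_le (g := fun s => -g s) (d := fun s => -d s) (m := -m)
    (fun s hs => (hg s hs).neg)
    (fun s hs => by have := hd s hs; show -d s ≤ -m; linarith) t ht
  linarith

/-- Barrier lemma: if `g a ≤ c` and whenever `g = c` the derivative is negative,
then `g ≤ c` on `[a,b]`. -/
lemma barrier {g d : ℝ → ℝ} {a b c : ℝ}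
    (hg : ∀ t ∈ Icc a b, HasDerivAt g (d t) t)
    (ha : g a ≤ c) (hneg : ∀ t ∈ Icc a b, g t = c → d t < 0) :
    ∀ t ∈ Icc a b, g t ≤ c := by
  by_contra hcon
  push_neg at hcon
  obtain ⟨t₁, ht₁, hgt₁⟩ := hcon
  have hcont : ContinuousOn g (Icc a b) :=
    fun s hs => ((hg s hs).continuousAt).continuousWithinAt
  have hsub : Icc a t₁ ⊆ Icc a b := Icc_subset_Icc le_rfl ht₁.2
  have hSclosed : IsClosed {t | t ∈ Icc a t₁ ∧ g t ≤ c} := by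
    have : {t | t ∈ Icc a t₁ ∧ g t ≤ c} = Icc a t₁ ∩ g ⁻¹' (Iic c) := rfl
    rw [this]
    exact (hcont.mono hsub).preimage_isClosed_of_isClosed isClosed_Icc isClosed_Iic
  have haS : a ∈ {t | t ∈ Icc a t₁ ∧ g t ≤ c} := ⟨left_mem_Icc.2 ht₁.1, ha⟩
  have hSne : Set.Nonempty {t | t ∈ Icc a t₁ ∧ g t ≤ c} := ⟨a, haS⟩
  have hSbdd : BddAbove {t | t ∈ Icc a t₁ ∧ g t ≤ c} :=
    (bddAbove_Icc (a := a) (b := t₁)).mono (fun s hs => hs.1)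
  have hsS : sSup {t | t ∈ Icc a t₁ ∧ g t ≤ c} ∈ {t | t ∈ Icc a t₁ ∧ g t ≤ c} :=
    hSclosed.csSup_mem hSne hSbdd
  obtain ⟨s, hseq⟩ : ∃ s, sSup {t | t ∈ Icc a t₁ ∧ g t ≤ c} = s := ⟨_, rfl⟩
  rw [hseq] at hsS
  have hst₁ : s ≤ t₁ := hsS.1.2
  have hslt : s < t₁ := lt_of_le_of_ne hst₁ (by rintro rfl; exact absurd hsS.2 (not_le.2 hgt₁))
  have hsmem : s ∈ Icc a b := hsub hsS.1
  have hev2 : ∀ᶠ u in 𝓝[>] s, u ∈ Ioo s t₁ := by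
    filter_upwards [Ioo_mem_nhdsGT_of_mem ⟨le_rfl, hslt⟩] with u hu using hu
  have key : ∃ u, s < u ∧ u ∈ Icc a t₁ ∧ g u ≤ c := by
    rcases lt_or_eq_of_le hsS.2 with hlt | heq
    · -- g s < c : continuity
      have hca : ContinuousAt g s := (hg s hsmem).continuousAt
      have hev : ∀ᶠ u in 𝓝[>] s, g u < c :=
        ((hca.eventually (eventually_lt_nhds hlt)).filter_mono nhdsWithin_le_nhds)
      obtain ⟨u, hu1, hu2⟩ := (hev.and hev2).exists
      exact ⟨u, hu2.1, ⟨le_trans hsS.1.1 (le_of_lt hu2.1), le_of_lt hu2.2⟩, le_of_lt hu1⟩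
    · -- g s = c : derivative negative
      have hd : d s < 0 := hneg s hsmem heq
      have hslope := hasDerivAt_iff_tendsto_slope.1 (hg s hsmem)
      have hev : ∀ᶠ u in 𝓝[≠] s, slope g s u < 0 :=
        hslope.eventually (eventually_lt_nhds hd)
      have hev' : ∀ᶠ u in 𝓝[>] s, slope g s u < 0 :=
        hev.filter_mono (nhdsWithin_mono s (fun u hu => ne_of_gt hu))
      obtain ⟨u, hu1, hu2⟩ := (hev'.and hev2).exists
      have hq : (g u - g s) / (u - s) < 0 := by
        simpa [slope_def_field] using hu1
      have hus : 0 < u - s := sub_pos.2 hu2.1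
      have hgus : g u - g s < 0 := by
        by_contra hge
        push_neg at hge
        exact absurd hq (not_lt.2 (div_nonneg hge (le_of_lt hus)))
      exact ⟨u, hu2.1, ⟨le_trans hsS.1.1 (le_of_lt hu2.1), le_of_lt hu2.2⟩, by linarith [heq]⟩
  obtain ⟨u, hsu, humem, hgu⟩ := key
  have : u ≤ s := by
    have := le_csSup hSbdd (show u ∈ {t | t ∈ Icc a t₁ ∧ g t ≤ c} from ⟨humem, hgu⟩)
    rwa [hseq] at this
  linarith


/-! ### Clamped power nonlinearity -/

noncomputable def clampTo (V y : ℝ) : ℝ := max (-V) (min y V)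

lemma clampTo_le {V : ℝ} (hV : 0 ≤ V) (y : ℝ) : clampTo V y ≤ V := by
  unfold clampTo
  exact max_le (by linarith) (min_le_right _ _)

lemma neg_le_clampTo (V y : ℝ) : -V ≤ clampTo V y := le_max_left _ _

lemma clampTo_eq {V y : ℝ} (h1 : -V ≤ y) (h2 : y ≤ V) : clampTo V y = y := by
  unfold clampTo
  rw [min_eq_left h2, max_eq_right h1]

lemma clampTo_lipschitz (V : ℝ) : LipschitzWith 1 (clampTo V) :=
  (LipschitzWith.id.min_const V).const_max (-V)

noncomputable def cpow (R n y : ℝ) : ℝ := (max 0 (min y R)) ^ n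

lemma clamp01_mem {R : ℝ} (hR : 0 ≤ R) (y : ℝ) : max 0 (min y R) ∈ Icc 0 R :=
  ⟨le_max_left _ _, max_le hR (min_le_right _ _)⟩

lemma cpow_nonneg (R n y : ℝ) : 0 ≤ cpow R n y :=
  Real.rpow_nonneg (le_max_left _ _) n

lemma cpow_le {R n : ℝ} (hR : 0 ≤ R) (hn : 0 ≤ n) (y : ℝ) : cpow R n y ≤ R ^ n :=
  Real.rpow_le_rpow (le_max_left _ _) (clamp01_mem hR y).2 hn

lemma cpow_mono {R n : ℝ} (hn : 0 ≤ n) {y z : ℝ} (hyz : y ≤ z) :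
    cpow R n y ≤ cpow R n z := by
  apply Real.rpow_le_rpow (le_max_left _ _) _ hn
  exact max_le_max le_rfl (min_le_min hyz le_rfl)

lemma cpow_eq {R n y : ℝ} (h0 : 0 ≤ y) (hyR : y ≤ R) : cpow R n y = y ^ n := by
  unfold cpow
  rw [min_eq_left hyR, max_eq_right h0]

lemma cpow_continuous {R n : ℝ} (hn : 0 < n) : Continuous (cpow R n) := by
  rw [continuous_iff_continuousAt]
  intro y
  have hclamp : Continuous fun y : ℝ => max 0 (min y R) :=
    continuous_const.max (continuous_id.min continuous_const)
  exact (Real.continuousAt_rpow_const _ _ (Or.inr hn.le)).comp hclamp.continuousAt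

lemma cpow_lipschitz {R n : ℝ} (hR : 0 ≤ R) (hn : 1 ≤ n) :
    LipschitzWith (n * R ^ (n - 1)).toNNReal (cpow R n) := by
  have hg : LipschitzOnWith (n * R ^ (n - 1)).toNNReal (fun y : ℝ => y ^ n) (Icc 0 R) := by
    apply (convex_Icc (0:ℝ) R).lipschitzOnWith_of_nnnorm_hasDerivWithin_le
      (f' := fun y => n * y ^ (n - 1))
    · exact fun y _ => (Real.hasDerivAt_rpow_const (Or.inr hn)).hasDerivWithinAt
    · intro y hy
      rw [← NNReal.coe_le_coe, coe_nnnorm, Real.norm_eq_abs,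
        Real.coe_toNNReal _ (mul_nonneg (by linarith) (Real.rpow_nonneg hR _))]
      rw [abs_of_nonneg (mul_nonneg (by linarith) (Real.rpow_nonneg hy.1 _))]
      have : y ^ (n - 1) ≤ R ^ (n - 1) := Real.rpow_le_rpow hy.1 hy.2 (by linarith)
      nlinarith [this, hn]
  have hclampLip : LipschitzWith 1 (fun y : ℝ => max 0 (min y R)) :=
    (LipschitzWith.id.min_const R).const_max 0
  have hcomp := hg.comp (hclampLip.lipschitzOnWith (s := Set.univ))
    (fun y _ => clamp01_mem hR y)
  rw [mul_one] at hcomp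
  have : cpow R n = (fun y : ℝ => y ^ n) ∘ (fun y : ℝ => max 0 (min y R)) := rfl
  rw [this]
  exact lipschitzOnWith_univ.1 hcomp

/-! ### Truncated potential -/

noncomputable def Phi (R n x : ℝ) : ℝ := ∫ t in (0:ℝ)..x, cpow R n t

lemma hasDerivAt_Phi {R n : ℝ} (hn : 0 < n) (x : ℝ) :
    HasDerivAt (Phi R n) (cpow R n x) x :=
  ((cpow_continuous hn).integral_hasStrictDerivAt 0 x).hasDerivAt

lemma Phi_zero (R n : ℝ) : Phi R n 0 = 0 := intervalIntegral.integral_same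

lemma Phi_nonneg {R n : ℝ} (hn : 0 < n) {x : ℝ} (hx : 0 ≤ x) : 0 ≤ Phi R n x :=
  intervalIntegral.integral_nonneg hx (fun u _ => cpow_nonneg R n u)

lemma Phi_mono {R n : ℝ} (hn : 0 < n) {x y : ℝ} (hxy : x ≤ y) :
    Phi R n x ≤ Phi R n y := by
  have h1 : IntervalIntegrable (cpow R n) MeasureTheory.volume 0 x :=
    (cpow_continuous hn).intervalIntegrable _ _
  have h2 : IntervalIntegrable (cpow R n) MeasureTheory.volume x y :=
    (cpow_continuous hn).intervalIntegrable _ _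
  have := intervalIntegral.integral_add_adjacent_intervals h1 h2
  have hnn : 0 ≤ ∫ t in x..y, cpow R n t :=
    intervalIntegral.integral_nonneg hxy (fun u _ => cpow_nonneg R n u)
  unfold Phi
  rw [← this]
  linarith

lemma Phi_le {R n : ℝ} (hR : 0 ≤ R) (hn : 0 < n) {x : ℝ} (hx : 0 ≤ x) :
    Phi R n x ≤ x * R ^ n := by
  have h1 : IntervalIntegrable (cpow R n) MeasureTheory.volume 0 x :=
    (cpow_continuous hn).intervalIntegrable _ _
  have h2 : IntervalIntegrable (fun _ : ℝ => R ^ n) MeasureTheory.volume 0 x :=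
    intervalIntegrable_const
  have := intervalIntegral.integral_mono_on hx h1 h2
    (fun u _ => cpow_le hR hn.le u)
  simpa [Phi, intervalIntegral.integral_const, smul_eq_mul] using this

lemma Phi_R_ge {R n : ℝ} (hR : 2 ≤ R) (hn : 1 ≤ n) : 1 ≤ Phi R n R := by
  have hn0 : (0:ℝ) < n := by linarith
  have h1 : IntervalIntegrable (cpow R n) MeasureTheory.volume 0 (R/2) :=
    (cpow_continuous hn0).intervalIntegrable _ _
  have h2 : IntervalIntegrable (cpow R n) MeasureTheory.volume (R/2) R :=
    (cpow_continuous hn0).intervalIntegrable _ _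
  have hadd := intervalIntegral.integral_add_adjacent_intervals h1 h2
  have hnn : 0 ≤ ∫ t in (0:ℝ)..(R/2), cpow R n t :=
    intervalIntegral.integral_nonneg (by linarith) (fun u _ => cpow_nonneg R n u)
  have hco : IntervalIntegrable (fun _ : ℝ => ((1:ℝ))) MeasureTheory.volume (R/2) R :=
    intervalIntegrable_const
  have hmono := intervalIntegral.integral_mono_on (by linarith : R/2 ≤ R) hco h2
    (fun u hu => by
      have h1u : (1:ℝ) ≤ u := by
        have := hu.1; linarith
      have huR : u ≤ R := hu.2
      have : cpow R n u = u ^ n := cpow_eq (by linarith) huR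
      rw [this]
      calc (1:ℝ) = u ^ (0:ℝ) := (Real.rpow_zero u).symm
      _ ≤ u ^ n := Real.rpow_le_rpow_of_exponent_le h1u (by linarith))
  have hval : (∫ _ in (R/2)..R, ((1:ℝ))) = R - R/2 := by
    simp [intervalIntegral.integral_const]
  unfold Phi
  rw [← hadd]
  have : (1:ℝ) ≤ R - R/2 := by linarith
  linarith [hmono, hnn, hval ▸ hmono]

/-! ### EReal comap lemmas -/

lemma comap_coe_nhdsWithin_Ioi (a : ℝ) :
    Filter.comap Real.toEReal (𝓝[>] (a : EReal)) = 𝓝[>] a := by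
  rw [nhdsWithin, nhdsWithin, Filter.comap_inf, Filter.comap_principal, EReal.nhds_coe,
    Filter.comap_map EReal.coe_injective]
  congr 1
  have : Real.toEReal ⁻¹' (Ioi (a : EReal)) = Ioi a := by
    ext x; simp [EReal.coe_lt_coe_iff]
  rw [this]

lemma comap_coe_nhdsWithin_Iio (a : ℝ) :
    Filter.comap Real.toEReal (𝓝[<] (a : EReal)) = 𝓝[<] a := by
  rw [nhdsWithin, nhdsWithin, Filter.comap_inf, Filter.comap_principal, EReal.nhds_coe,
    Filter.comap_map EReal.coe_injective]
  congr 1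
  have : Real.toEReal ⁻¹' (Iio (a : EReal)) = Iio a := by
    ext x; simp [EReal.coe_lt_coe_iff]
  rw [this]

/-! ### The crossing lemma -/

set_option maxHeartbeats 1600000 in
lemma crossing {x v : ℝ → ℝ} {n R Rn δ γ tA T V ε : ℝ}
    (hn : 1 ≤ n) (hR : 2 ≤ R)
    (hRn : Rn = R ^ n)
    (hδ : δ = 1 / (8 * Rn))
    (hγ : γ = δ ^ n)
    (htA : tA = 1 + (2:ℝ) ^ n)
    (hT : T = tA + 2 / γ + 2 * R)
    (hV : V = 2 * (1 + Rn * T))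
    (hε : 0 < ε) (hεγ : ε ≤ γ) (hεT : ε * V ^ 2 * T ≤ 1 / 4)
    (hx0 : x 0 = 0) (hv0 : v 0 = 1)
    (hdx : ∀ t ∈ Icc 0 T, HasDerivAt x (clampTo V (v t)) t)
    (hdv : ∀ t ∈ Icc 0 T, HasDerivAt v (-ε * clampTo V (v t) - cpow R n (x t)) t) :
    ∃ T₀, 0 < T₀ ∧ T₀ ≤ T ∧ x T₀ = 0 ∧ v T₀ < 0 ∧
      ∀ t, 0 < t → t < T₀ → 0 < x t ∧ x t < R ∧ -V ≤ v t ∧ v t ≤ V := by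
  have hn0 : (0:ℝ) < n := by linarith
  have hR0 : (0:ℝ) ≤ R := by linarith
  have hRn1 : 1 ≤ Rn := by
    rw [hRn]
    calc (1:ℝ) = R ^ (0:ℝ) := (Real.rpow_zero R).symm
    _ ≤ R ^ n := Real.rpow_le_rpow_of_exponent_le (by linarith) hn0.le
  have hRnpos : 0 < Rn := by linarith
  have hδpos : 0 < δ := by rw [hδ]; positivity
  have hδ8 : δ ≤ 1/8 := by
    rw [hδ]
    rw [div_le_div_iff₀ (by linarith) (by norm_num)]
    linarith
  have hδR : δ ≤ R := by linarith
  have hγpos : 0 < γ := by rw [hγ]; exact Real.rpow_pos_of_pos hδpos n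
  have h2n : (0:ℝ) < (2:ℝ) ^ n := Real.rpow_pos_of_pos (by norm_num) n
  have htA1 : 1 ≤ tA := by rw [htA]; linarith
  have htAT : tA ≤ T := by
    rw [hT]
    have : 0 < 2/γ := by positivity
    linarith
  have hTpos : 0 < T := by linarith
  have hV2 : 2 ≤ V := by rw [hV]; nlinarith [hRnpos.le, hTpos.le]
  have hVpos : 0 < V := by linarith
  have hεVT : ε * V * T ≤ 1/8 := by nlinarith [hεT, hV2, mul_pos (mul_pos hε hVpos) hTpos]
  have hRnT : 0 ≤ Rn * T := by positivity
  obtain ⟨K, hK⟩ : ∃ K : ℝ, K = ε * V + Rn := ⟨_, rfl⟩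
  have hKpos : 0 < K := by rw [hK]; positivity
  -- v ≤ 1 on [0,T]
  have hv1 : ∀ t ∈ Icc 0 T, v t ≤ 1 := by
    apply barrier hdv (by rw [hv0])
    intro t ht heq
    rw [heq, clampTo_eq (by linarith) (by linarith)]
    have := cpow_nonneg R n (x t)
    linarith
  -- linear lower bound for v
  have hvlow : ∀ t ∈ Icc 0 T, 1 - K * t ≤ v t := by
    intro t ht
    have := ge_linear_of_deriv_ge hdv (m := -K) (fun s hs => by
      have h1 : clampTo V (v s) ≤ V := clampTo_le hVpos.le _
      have h2 : cpow R n (x s) ≤ Rn := hRn ▸ cpow_le hR0 hn0.le (x s)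
      have := mul_le_mul_of_nonneg_left h1 hε.le
      rw [hK]
      nlinarith) t ht
    rw [hv0] at this
    linarith
  have hKT : K * T ≤ 1/8 + Rn * T := by
    rw [hK]; nlinarith [hεVT]

  -- -V < v on [0,T]
  have hvV : ∀ t ∈ Icc 0 T, -V < v t := by
    intro t ht
    have h1 := hvlow t ht
    have h2 : K * t ≤ K * T := mul_le_mul_of_nonneg_left ht.2 hKpos.le
    have h3 : 1 - (1/8 + Rn * T) ≤ v t := by linarith [h1, h2, hKT]
    rw [hV]
    linarith [hRnT]
  -- clamp is inactive
  have hψ : ∀ t ∈ Icc 0 T, clampTo V (v t) = v t := fun t ht =>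
    clampTo_eq (hvV t ht).le (le_trans (hv1 t ht) (by linarith))
  have hdv' : ∀ t ∈ Icc 0 T, HasDerivAt v (-ε * v t - cpow R n (x t)) t := by
    intro t ht
    have := hdv t ht
    rwa [hψ t ht] at this
  have hdx' : ∀ t ∈ Icc 0 T, HasDerivAt x (v t) t := by
    intro t ht
    have := hdx t ht
    rwa [hψ t ht] at this
  -- energy
  set E : ℝ → ℝ := fun t => (v t)^2/2 + Phi R n (x t) with hE
  have hdE : ∀ t ∈ Icc 0 T, HasDerivAt E (-ε * (v t)^2) t := by
    intro t ht
    have h1 : HasDerivAt (fun s => (v s)^2/2)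
        ((2 * v t ^ 1 * (-ε * v t - cpow R n (x t)))/2) t := ((hdv' t ht).pow 2).div_const 2
    have h2 : HasDerivAt (fun s => Phi R n (x s)) (cpow R n (x t) * v t) t :=
      (hasDerivAt_Phi hn0 (x t)).comp t (hdx' t ht)
    have := h1.add h2
    refine this.congr_deriv ?_
    ring
  have hE0 : E 0 = 1/2 := by
    simp only [hE, hx0, hv0, Phi_zero]
    norm_num
  have hEle : ∀ t ∈ Icc 0 T, E t ≤ 1/2 := by
    intro t ht
    have := le_linear_of_deriv_le hdE (m := 0) (fun s hs => by nlinarith [sq_nonneg (v s)]) t ht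
    rw [hE0] at this
    linarith
  have hvsq : ∀ t ∈ Icc 0 T, (v t)^2 ≤ V^2 := by
    intro t ht
    have h1 := hvV t ht
    have h2 := hv1 t ht
    nlinarith
  have hEge : ∀ t ∈ Icc 0 T, 1/4 ≤ E t := by
    intro t ht
    have := ge_linear_of_deriv_ge hdE (m := -(ε * V^2)) (fun s hs => by
      have := hvsq s hs
      nlinarith) t ht
    rw [hE0] at this
    have h2 : ε * V^2 * t ≤ ε * V^2 * T := by
      apply mul_le_mul_of_nonneg_left ht.2
      positivity
    nlinarith
  have hPhile : ∀ t ∈ Icc 0 T, Phi R n (x t) ≤ 1/2 := by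
    intro t ht
    have := hEle t ht
    have h2 : 0 ≤ (v t)^2/2 := by positivity
    simp only [hE] at this
    linarith
  -- x < R on [0,T]
  have hxR : ∀ t ∈ Icc 0 T, x t < R := by
    intro t ht
    by_contra hcon
    push_neg at hcon
    have h1 : Phi R n R ≤ Phi R n (x t) := Phi_mono hn0 hcon
    have h2 : (1:ℝ) ≤ Phi R n R := Phi_R_ge hR hn
    have := hPhile t ht
    linarith
  -- existence of a crossing point
  have hcross : ∃ tw, tw ∈ Ioc 0 T ∧ x tw ≤ 0 := by
    by_contra hcon
    push_neg at hcon
    replace hcon : ∀ t ∈ Ioc 0 T, 0 < x t := hcon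
    -- Phase A: v drops below 1/2 before tA
    have ht₁ : ∃ t₁ ∈ Icc 0 tA, v t₁ ≤ 1/2 := by
      by_contra hA
      push_neg at hA
      have hsubA : Icc 0 tA ⊆ Icc 0 T := Icc_subset_Icc le_rfl htAT
      have hxlin := ge_linear_of_deriv_ge (a := 0) (b := tA) (d := fun t => v t) (m := (1/2:ℝ))
        (fun t ht => hdx' t (hsubA ht)) (fun s hs => (hA s hs).le)
      have hsubA2 : Icc 1 tA ⊆ Icc 0 T := Icc_subset_Icc (by norm_num) htAT
      have hvlin := le_linear_of_deriv_le (a := 1) (b := tA)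
        (d := fun t => -ε * v t - cpow R n (x t))
        (m := -((1/2:ℝ)^n)) (fun t ht => hdv' t (hsubA2 ht)) (fun s hs => by
          have hs' : s ∈ Icc 0 tA := ⟨by linarith [hs.1], hs.2⟩
          have hxs : 1/2 ≤ x s := by
            have h := hxlin s hs'
            rw [hx0] at h
            have := hs.1
            linarith
          have hcp : ((1/2:ℝ))^n ≤ cpow R n (x s) := by
            have h1 : cpow R n (1/2 : ℝ) ≤ cpow R n (x s) := cpow_mono hn0.le hxs
            rwa [cpow_eq (by norm_num) (by linarith)] at h1
          have hvs : 0 < v s := by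
            have := hA s hs'
            linarith
          nlinarith [mul_pos hε hvs]) tA (right_mem_Icc.2 htA1)
      have hv1' : v 1 ≤ 1 := hv1 1 ⟨by norm_num, by linarith⟩
      have hone : ((1/2:ℝ))^n * (2:ℝ)^n = 1 := by
        rw [← Real.mul_rpow (by norm_num) (by norm_num)]
        norm_num
      have htAval : tA - 1 = (2:ℝ)^n := by rw [htA]; ring
      have : v tA ≤ 0 := by
        rw [htAval] at hvlin
        nlinarith
      have := hA tA ⟨by linarith, le_rfl⟩
      linarith
    obtain ⟨t₁, ht₁mem, ht₁v⟩ := ht₁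
    have ht₁pos : 0 < t₁ := by
      rcases lt_or_eq_of_le ht₁mem.1 with h | h
      · exact h
      · exfalso; rw [← h, hv0] at ht₁v; linarith
    have ht₁T : t₁ ≤ T := le_trans ht₁mem.2 htAT
    -- v stays below 1/2
    have hsub1 : Icc t₁ T ⊆ Icc 0 T := Icc_subset_Icc ht₁pos.le le_rfl
    have hvhalf : ∀ t ∈ Icc t₁ T, v t ≤ 1/2 := by
      apply barrier (fun t ht => hdv' t (hsub1 ht)) ht₁v
      intro t ht heq
      rw [heq]
      have := cpow_nonneg R n (x t)
      linarith
    -- lower bound on x when v is moderate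
    have hmid : ∀ t ∈ Icc t₁ T, -(1/2) ≤ v t → γ ≤ cpow R n (x t) := by
      intro t ht hvt
      have htT : t ∈ Icc 0 T := hsub1 ht
      have hv2 : (v t)^2 ≤ 1/4 := by
        have := hvhalf t ht
        nlinarith
      have hPhi : 1/8 ≤ Phi R n (x t) := by
        have := hEge t htT
        simp only [hE] at this
        linarith
      have hxt : 0 < x t := hcon t ⟨lt_of_lt_of_le ht₁pos ht.1, ht.2⟩
      have hxle := Phi_le hR0 hn0 hxt.le
      have hxδ : δ ≤ x t := by
        rw [hδ]
        rw [div_le_iff₀ (by linarith)]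
        rw [hRn]
        nlinarith [hxle, hPhi]
      calc γ = cpow R n δ := by rw [cpow_eq hδpos.le hδR, hγ]
      _ ≤ cpow R n (x t) := cpow_mono hn0.le hxδ
    -- Phase B: v drops below -1/2
    have ht₁γT : t₁ + 2/γ ≤ T := by
      have : t₁ ≤ tA := ht₁mem.2
      rw [hT]
      linarith
    have ht₂ : ∃ t₂ ∈ Icc t₁ (t₁ + 2/γ), v t₂ ≤ -(1/2) := by
      by_contra hB
      push_neg at hB
      have hsubB : Icc t₁ (t₁ + 2/γ) ⊆ Icc t₁ T := Icc_subset_Icc le_rfl ht₁γT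
      have hvlin := le_linear_of_deriv_le (a := t₁) (b := t₁ + 2/γ)
        (d := fun t => -ε * v t - cpow R n (x t))
        (m := -(γ/2)) (fun t ht => hdv' t (hsub1 (hsubB ht))) (fun s hs => by
          have hvs := hB s hs
          have hcp := hmid s (hsubB hs) hvs.le
          have hvs2 := hvhalf s (hsubB hs)
          nlinarith [mul_pos hε hγpos]) (t₁ + 2/γ)
        (right_mem_Icc.2 (le_add_of_nonneg_right (div_nonneg (by norm_num) hγpos.le)))
      have h5 : -(γ/2) * (t₁ + 2/γ - t₁) = -1 := by
        have h6 : t₁ + 2/γ - t₁ = 2/γ := by ring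
        rw [h6]
        field_simp
      have hstep : v (t₁ + 2/γ) ≤ v t₁ - 1 := by linarith [hvlin, h5]
      have := hB (t₁ + 2/γ)
        (right_mem_Icc.2 (le_add_of_nonneg_right (div_nonneg (by norm_num) hγpos.le)))
      linarith
    obtain ⟨t₂, ht₂mem, ht₂v⟩ := ht₂
    have ht₂T : t₂ ≤ T := le_trans ht₂mem.2 ht₁γT
    have ht₂pos : 0 < t₂ := lt_of_lt_of_le ht₁pos ht₂mem.1
    -- v stays below -1/2
    have hsub2 : Icc t₂ T ⊆ Icc t₁ T := Icc_subset_Icc ht₂mem.1 le_rfl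
    have hvneg : ∀ t ∈ Icc t₂ T, v t ≤ -(1/2) := by
      apply barrier (fun t ht => hdv' t (hsub1 (hsub2 ht))) ht₂v
      intro t ht heq
      have hcp := hmid t (hsub2 ht) (le_of_eq heq.symm)
      rw [heq]
      nlinarith
    -- Phase C: x hits zero
    have hxlin := le_linear_of_deriv_le (a := t₂) (b := T) (d := fun t => v t)
      (m := -(1/2:ℝ)) (fun t ht => hdx' t (hsub1 (hsub2 ht))) (fun s hs => hvneg s hs)
      T (right_mem_Icc.2 ht₂T)
    have hxt₂ : x t₂ < R := hxR t₂ ⟨ht₂pos.le, ht₂T⟩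
    have ht₂tA : t₂ ≤ tA + 2/γ := by
      have := ht₂mem.2
      have := ht₁mem.2
      linarith
    have hxT : x T ≤ 0 := by
      have h2R : 2 * R ≤ T - t₂ := by rw [hT]; linarith
      nlinarith [hxlin]
    have := hcon T ⟨hTpos, le_rfl⟩
    linarith
  -- construct the first crossing time
  obtain ⟨tw, htw, hxtw⟩ := hcross
  obtain ⟨σ, hσdef⟩ : ∃ σ : ℝ, σ = min (1/(2*K)) T := ⟨_, rfl⟩
  have hσpos : 0 < σ := by
    rw [hσdef]
    exact lt_min (one_div_pos.2 (by linarith)) hTpos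
  have hσT : σ ≤ T := by rw [hσdef]; exact min_le_right _ _
  have hσv : ∀ t ∈ Icc 0 σ, 1/2 ≤ v t := by
    intro t ht
    have h1 := hvlow t ⟨ht.1, le_trans ht.2 hσT⟩
    have h2 : K * t ≤ K * σ := mul_le_mul_of_nonneg_left ht.2 hKpos.le
    have h3 : K * σ ≤ K * (1/(2*K)) := by
      rw [hσdef]
      exact mul_le_mul_of_nonneg_left (min_le_left _ _) hKpos.le
    have h4 : K * (1/(2*K)) = 1/2 := by
      field_simp
    linarith
  have hσx : ∀ t ∈ Icc 0 σ, t/2 ≤ x t := by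
    intro t ht
    have h := ge_linear_of_deriv_ge (d := fun s => v s) (m := (1/2:ℝ))
      (fun s hs => hdx' s ⟨hs.1, le_trans hs.2 hσT⟩) hσv t ht
    rw [hx0] at h
    linarith
  have htwσ : σ < tw := by
    by_contra hcon
    push_neg at hcon
    have := hσx tw ⟨htw.1.le, hcon⟩
    have := htw.1
    linarith
  -- first crossing time
  have hScl : IsClosed {t | t ∈ Icc σ T ∧ x t ≤ 0} := by
    have : {t | t ∈ Icc σ T ∧ x t ≤ 0} = Icc σ T ∩ x ⁻¹' (Iic 0) := rfl
    rw [this]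
    refine ContinuousOn.preimage_isClosed_of_isClosed ?_ isClosed_Icc isClosed_Iic
    exact fun s hs => ((hdx s ⟨le_trans hσpos.le hs.1, hs.2⟩).continuousAt).continuousWithinAt
  have hSne : Set.Nonempty {t | t ∈ Icc σ T ∧ x t ≤ 0} := ⟨tw, ⟨htwσ.le, htw.2⟩, hxtw⟩
  have hSbdd : BddBelow {t | t ∈ Icc σ T ∧ x t ≤ 0} :=
    (bddBelow_Icc : BddBelow (Icc σ T)).mono (fun s hs => hs.1)
  have hT₀mem : sInf {t | t ∈ Icc σ T ∧ x t ≤ 0} ∈ {t | t ∈ Icc σ T ∧ x t ≤ 0} :=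
    hScl.csInf_mem hSne hSbdd
  obtain ⟨T₀, hT₀eq⟩ : ∃ T₀, sInf {t | t ∈ Icc σ T ∧ x t ≤ 0} = T₀ := ⟨_, rfl⟩
  rw [hT₀eq] at hT₀mem
  have hT₀pos : 0 < T₀ := lt_of_lt_of_le hσpos hT₀mem.1.1
  have hT₀T : T₀ ≤ T := hT₀mem.1.2
  have hxpos : ∀ t, 0 < t → t < T₀ → 0 < x t := by
    intro t ht0 htT₀
    rcases le_or_gt t σ with h | h
    · have := hσx t ⟨ht0.le, h⟩
      linarith
    · by_contra hcon
      push_neg at hcon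
      have htS : t ∈ {s | s ∈ Icc σ T ∧ x s ≤ 0} := ⟨⟨h.le, le_trans htT₀.le hT₀T⟩, hcon⟩
      have := csInf_le hSbdd htS
      rw [hT₀eq] at this
      linarith
  have hxT₀ : x T₀ = 0 := by
    have hle : x T₀ ≤ 0 := hT₀mem.2
    have hge : 0 ≤ x T₀ := by
      have hcw : Tendsto x (𝓝[<] T₀) (𝓝 (x T₀)) :=
        ((hdx T₀ ⟨hT₀pos.le, hT₀T⟩).continuousAt).continuousWithinAt
      apply ge_of_tendsto hcw
      filter_upwards [Ioo_mem_nhdsLT_of_mem (⟨hT₀pos, le_rfl⟩ : T₀ ∈ Ioc 0 T₀)] with t ht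
      exact (hxpos t ht.1 ht.2).le
    linarith
  have hvT₀ : v T₀ < 0 := by
    have hT₀Icc : T₀ ∈ Icc 0 T := ⟨hT₀pos.le, hT₀T⟩
    have hET₀ := hEge T₀ hT₀Icc
    have hsq : 1/2 ≤ (v T₀)^2 := by
      simp only [hE, hxT₀, Phi_zero] at hET₀
      linarith
    have hvle : v T₀ ≤ 0 := by
      by_contra hcon
      push_neg at hcon
      have hder := hdx' T₀ hT₀Icc
      have hslope := hasDerivAt_iff_tendsto_slope.1 hder
      have hev : ∀ᶠ u in 𝓝[≠] T₀, 0 < slope x T₀ u :=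
        hslope.eventually (eventually_gt_nhds hcon)
      have hev' : ∀ᶠ u in 𝓝[<] T₀, 0 < slope x T₀ u :=
        hev.filter_mono (nhdsWithin_mono T₀ (fun u hu => ne_of_lt hu))
      have hev2 : ∀ᶠ u in 𝓝[<] T₀, u ∈ Ioo 0 T₀ := by
        filter_upwards [Ioo_mem_nhdsLT_of_mem (⟨hT₀pos, le_rfl⟩ : T₀ ∈ Ioc 0 T₀)] with u hu
        exact hu
      obtain ⟨u, hu1, hu2⟩ := (hev'.and hev2).exists
      have hq : 0 < (x u - x T₀) / (u - T₀) := by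
        simpa [slope_def_field] using hu1
      rw [hxT₀] at hq
      have hneg : u - T₀ < 0 := by linarith [hu2.2]
      have : x u < 0 := by
        by_contra hge
        push_neg at hge
        have : (x u - 0) / (u - T₀) ≤ 0 := div_nonpos_iff.2 (Or.inl ⟨by linarith, hneg.le⟩)
        linarith
      have := hxpos u hu2.1 hu2.2
      linarith
    rcases lt_or_eq_of_le hvle with h | h
    · exact h
    · exfalso; rw [h] at hsq; norm_num at hsq
  refine ⟨T₀, hT₀pos, hT₀T, hxT₀, hvT₀, ?_⟩
  intro t ht0 htT₀
  have htIcc : t ∈ Icc 0 T := ⟨ht0.le, le_trans htT₀.le hT₀T⟩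
  exact ⟨hxpos t ht0 htT₀, hxR t htIcc, (hvV t htIcc).le,
    le_trans (hv1 t htIcc) (by linarith)⟩

end Stmt12Aux

lemma hasDerivAt_fst' {f : ℝ → ℝ × ℝ} {p : ℝ × ℝ} {t : ℝ} (h : HasDerivAt f p t) :
    HasDerivAt (fun s => (f s).1) p.1 t := by
  have := (hasFDerivAt_fst (𝕜 := ℝ) (p := f t)).comp_hasDerivAt t h
  exact this

lemma hasDerivAt_snd' {f : ℝ → ℝ × ℝ} {p : ℝ × ℝ} {t : ℝ} (h : HasDerivAt f p t) :
    HasDerivAt (fun s => (f s).2) p.2 t := by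
  have := (hasFDerivAt_snd (𝕜 := ℝ) (p := f t)).comp_hasDerivAt t h
  exact this



open Stmt12Aux

set_option maxHeartbeats 1600000 in
/-- Existence of a connecting orbit from the critical point at
infinity `Q₂` (where `Y → +∞`) to the critical point at infinity `Q₃` (where
`Y → -∞`) for the planar system `Y' = -Y² - bY - W`, `W' = qYW`: there is a maximal
solution on an interval `(η₋, η₊)` (with `-∞ ≤ η₋ < η₊ ≤ +∞`) along which `W > 0`,
with `Y → +∞` as `η → η₋⁺` and `Y → -∞` as `η → η₊⁻`. -/
theorem stmt_12 (b q : ℝ) (hb : 0 < b) (hq : 0 < q) :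
    ∃ (ηm ηp : EReal) (Y W : ℝ → ℝ), ηm < ηp ∧
      (∀ η : ℝ, ηm < (η : EReal) → (η : EReal) < ηp →
        HasDerivAt Y (-(Y η) ^ 2 - b * Y η - W η) η ∧
        HasDerivAt W (q * Y η * W η) η ∧
        0 < W η) ∧
      Tendsto Y (comap Real.toEReal (𝓝[>] ηm)) atTop ∧
      Tendsto Y (comap Real.toEReal (𝓝[<] ηp)) atBot := by
  classical
  obtain ⟨n, hn⟩ : ∃ n : ℝ, n = q + 1 := ⟨_, rfl⟩
  obtain ⟨R, hRdef⟩ : ∃ R : ℝ, R = q + 2 := ⟨_, rfl⟩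
  obtain ⟨Rn, hRn⟩ : ∃ Rn : ℝ, Rn = R ^ n := ⟨_, rfl⟩
  obtain ⟨δ, hδ⟩ : ∃ δ : ℝ, δ = 1 / (8 * Rn) := ⟨_, rfl⟩
  obtain ⟨γ, hγ⟩ : ∃ γ : ℝ, γ = δ ^ n := ⟨_, rfl⟩
  obtain ⟨tA, htA⟩ : ∃ tA : ℝ, tA = 1 + (2:ℝ) ^ n := ⟨_, rfl⟩
  obtain ⟨T, hT⟩ : ∃ T : ℝ, T = tA + 2 / γ + 2 * R := ⟨_, rfl⟩
  obtain ⟨V, hV⟩ : ∃ V : ℝ, V = 2 * (1 + Rn * T) := ⟨_, rfl⟩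
  have hn1 : 1 ≤ n := by rw [hn]; linarith
  have hn0 : 0 < n := by linarith
  have hR2 : 2 ≤ R := by rw [hRdef]; linarith
  have hR0 : (0:ℝ) ≤ R := by linarith
  have hRn1 : 1 ≤ Rn := by
    rw [hRn]
    calc (1:ℝ) = R ^ (0:ℝ) := (Real.rpow_zero R).symm
    _ ≤ R ^ n := Real.rpow_le_rpow_of_exponent_le (by linarith) hn0.le
  have hδpos : 0 < δ := by rw [hδ]; positivity
  have hγpos : 0 < γ := by rw [hγ]; exact Real.rpow_pos_of_pos hδpos n
  have h2n : (0:ℝ) < (2:ℝ) ^ n := Real.rpow_pos_of_pos (by norm_num) n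
  have htA1 : 1 ≤ tA := by rw [htA]; linarith
  have hTpos : 0 < T := by
    rw [hT]
    have : 0 < 2/γ := by positivity
    linarith
  have hV2 : 2 ≤ V := by
    rw [hV]
    nlinarith [mul_nonneg (by linarith : (0:ℝ) ≤ Rn) hTpos.le]
  have hVpos : 0 < V := by linarith
  obtain ⟨ε, hεdef⟩ : ∃ ε : ℝ, ε = min γ (1/(4*V^2*T)) := ⟨_, rfl⟩
  have hεpos : 0 < ε := by
    rw [hεdef]
    exact lt_min hγpos (one_div_pos.2
      (mul_pos (mul_pos (by norm_num) (pow_pos hVpos 2)) hTpos))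
  have hεγ : ε ≤ γ := by rw [hεdef]; exact min_le_left _ _
  have hεT : ε * V^2 * T ≤ 1/4 := by
    have h1 : ε ≤ 1/(4*V^2*T) := by rw [hεdef]; exact min_le_right _ _
    have h2 : (0:ℝ) ≤ V^2 * T := by positivity
    have h3 : ε * (V^2*T) ≤ (1/(4*V^2*T)) * (V^2*T) := mul_le_mul_of_nonneg_right h1 h2
    have h4 : (1/(4*V^2*T)) * (V^2*T) = 1/4 := by
      field_simp
    nlinarith [h3]
  -- the truncated vector field
  set F : ℝ × ℝ → ℝ × ℝ :=
    fun p => (clampTo V p.2, -ε * clampTo V p.2 - cpow R n p.1) with hF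
  have hL2a : LipschitzWith 1 (fun p : ℝ × ℝ => clampTo V p.2) := by
    have := (clampTo_lipschitz V).comp (LipschitzWith.prod_snd : LipschitzWith 1 (Prod.snd : ℝ × ℝ → ℝ))
    rw [mul_one] at this
    exact this
  have hL2b : LipschitzWith (‖-ε‖₊ * 1) (fun p : ℝ × ℝ => -ε * clampTo V p.2) := by
    have := (lipschitzWith_smul (α := ℝ) (β := ℝ) (-ε)).comp hL2a
    simpa [Function.comp_def, smul_eq_mul] using this
  have hL2c : LipschitzWith ((n * R ^ (n-1)).toNNReal * 1) (fun p : ℝ × ℝ => cpow R n p.1) :=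
    (cpow_lipschitz hR0 hn1).comp LipschitzWith.prod_fst
  have hL2 : LipschitzWith (‖-ε‖₊ * 1 + (n * R ^ (n-1)).toNNReal * 1)
      (fun p : ℝ × ℝ => -ε * clampTo V p.2 - cpow R n p.1) := hL2b.sub hL2c
  have hLF : LipschitzWith (max 1 (‖-ε‖₊ * 1 + (n * R ^ (n-1)).toNNReal * 1)) F :=
    hL2a.prodMk hL2
  obtain ⟨Cb, hCb⟩ : ∃ Cb : ℝ, Cb = V + (ε * V + Rn) := ⟨_, rfl⟩
  have hCb0 : 0 < Cb := by rw [hCb]; positivity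
  have hFb : ∀ p : ℝ × ℝ, ‖F p‖ ≤ Cb := by
    intro p
    rw [Prod.norm_def]
    apply max_le
    · have h1 : |clampTo V p.2| ≤ V := abs_le.2 ⟨neg_le_clampTo _ _, clampTo_le hVpos.le _⟩
      rw [Real.norm_eq_abs, hCb]
      have : 0 ≤ ε * V + Rn := by positivity
      linarith
    · rw [Real.norm_eq_abs, hCb]
      have h1 : |clampTo V p.2| ≤ V := abs_le.2 ⟨neg_le_clampTo _ _, clampTo_le hVpos.le _⟩
      have h2 : |cpow R n p.1| ≤ Rn := by
        rw [abs_of_nonneg (cpow_nonneg R n p.1)]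
        exact hRn ▸ cpow_le hR0 hn0.le p.1
      calc |(-ε * clampTo V p.2 - cpow R n p.1)|
          ≤ |(-ε * clampTo V p.2)| + |cpow R n p.1| := abs_sub _ _
      _ = ε * |clampTo V p.2| + |cpow R n p.1| := by
          rw [abs_mul, abs_neg, abs_of_nonneg hεpos.le]
      _ ≤ ε * V + Rn := by
          have := mul_le_mul_of_nonneg_left h1 hεpos.le
          linarith
      _ ≤ V + (ε * V + Rn) := by linarith
  have hpl : @IsPicardLindelof (ℝ × ℝ) _ (fun _ p => F p) (-1) (T+1)
      ⟨0, by constructor <;> linarith⟩ ((0:ℝ), (1:ℝ)) (Cb * (T+2)).toNNReal 0 Cb.toNNReal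
      (max 1 (‖-ε‖₊ * 1 + (n * R ^ (n-1)).toNNReal * 1)) := by
    constructor
    · intro t _
      exact hLF.lipschitzOnWith
    · exact fun p _ => continuousOn_const
    · intro t _ p _
      rw [Real.coe_toNNReal _ hCb0.le]
      exact hFb p
    · have : max (T + 1 - 0) (0 - -1) = T + 1 := by
        rw [max_eq_left] <;> linarith
      simp only [Real.coe_toNNReal _ hCb0.le, Real.coe_toNNReal _ (by positivity : 0 ≤ Cb * (T+2)),
        NNReal.coe_zero, sub_zero]
      rw [max_eq_left (by linarith)]
      nlinarith
  obtain ⟨f, hf0', hfd⟩ := hpl.exists_eq_forall_mem_Icc_hasDerivWithinAt₀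
  have hf0 : f 0 = ((0:ℝ), (1:ℝ)) := hf0'
  set x : ℝ → ℝ := fun t => (f t).1 with hxdef
  set v : ℝ → ℝ := fun t => (f t).2 with hvdef
  have hD : ∀ t ∈ Set.Icc 0 T, HasDerivAt f (F (f t)) t := by
    intro t ht
    have h1 : t ∈ Set.Icc (-1 : ℝ) (T+1) := ⟨by linarith [ht.1], by linarith [ht.2]⟩
    exact (hfd t h1).hasDerivAt (Icc_mem_nhds (by linarith [ht.1]) (by linarith [ht.2]))
  have hdx : ∀ t ∈ Set.Icc 0 T, HasDerivAt x (clampTo V (v t)) t := by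
    intro t ht
    have := hasDerivAt_fst' (hD t ht)
    simpa [hF] using this
  have hdv : ∀ t ∈ Set.Icc 0 T,
      HasDerivAt v (-ε * clampTo V (v t) - cpow R n (x t)) t := by
    intro t ht
    have := hasDerivAt_snd' (hD t ht)
    simpa [hF] using this
  have hx0 : x 0 = 0 := by rw [hxdef]; simp [hf0]
  have hv0 : v 0 = 1 := by rw [hvdef]; simp [hf0]
  obtain ⟨T₀, hT₀pos, hT₀T, hxT₀, hvT₀, hbounds⟩ :=
    crossing hn1 hR2 hRn hδ hγ htA hT hV hεpos hεγ hεT hx0 hv0 hdx hdv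
  -- rescale
  obtain ⟨lam, hlam⟩ : ∃ lam : ℝ, lam = b / ε := ⟨_, rfl⟩
  have hlampos : 0 < lam := by rw [hlam]; positivity
  have hεlam : ε * lam = b := by rw [hlam]; field_simp
  have hηppos : 0 < T₀ / lam := div_pos hT₀pos hlampos
  refine ⟨((0:ℝ) : EReal), ((T₀ / lam : ℝ) : EReal),
    (fun η => lam * v (lam * η) / x (lam * η)),
    (fun η => lam^2 * (x (lam * η)) ^ q), ?_, ?_, ?_, ?_⟩
  · exact EReal.coe_lt_coe_iff.2 hηppos
  · intro η hη1 hη2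
    have hη0 : 0 < η := EReal.coe_lt_coe_iff.1 hη1
    have hηp : η < T₀ / lam := EReal.coe_lt_coe_iff.1 hη2
    have ht0 : 0 < lam * η := mul_pos hlampos hη0
    have htT₀ : lam * η < T₀ := by
      rw [mul_comm]
      exact (lt_div_iff₀ hlampos).1 hηp
    obtain ⟨hx1, hx2, hv1, hv2⟩ := hbounds (lam * η) ht0 htT₀
    have htIcc : lam * η ∈ Set.Icc 0 T := ⟨ht0.le, by linarith⟩
    have hxne : x (lam * η) ≠ 0 := hx1.ne'
    have hdxt : HasDerivAt x (v (lam * η)) (lam * η) := by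
      have := hdx _ htIcc
      rwa [clampTo_eq hv1 hv2] at this
    have hdvt : HasDerivAt v (-ε * v (lam * η) - (x (lam * η)) ^ n) (lam * η) := by
      have := hdv _ htIcc
      rwa [clampTo_eq hv1 hv2, cpow_eq hx1.le hx2.le] at this
    have hmul : HasDerivAt (fun η' : ℝ => lam * η') lam η := by
      simpa using (hasDerivAt_id η).const_mul lam
    have hXc : HasDerivAt (fun η' => x (lam * η')) (v (lam * η) * lam) η :=
      hdxt.comp η hmul
    have hVc : HasDerivAt (fun η' => v (lam * η'))
        ((-ε * v (lam * η) - (x (lam * η)) ^ n) * lam) η := hdvt.comp η hmul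
    have hxq : (x (lam * η)) ^ (q - 1) * (x (lam * η)) = (x (lam * η)) ^ q := by
      rw [Real.rpow_sub_one hxne]
      field_simp
    have hxn : (x (lam * η)) ^ n = (x (lam * η)) ^ q * (x (lam * η)) := by
      rw [hn]
      exact Real.rpow_add_one hxne q
    refine ⟨?_, ?_, ?_⟩
    · -- Y' = -Y² - bY - W
      have hnum : HasDerivAt (fun η' => lam * v (lam * η'))
          (lam * ((-ε * v (lam * η) - (x (lam * η)) ^ n) * lam)) η := hVc.const_mul lam
      have hYd := hnum.div hXc hxne
      have heq : (lam * ((-ε * v (lam * η) - x (lam * η) ^ n) * lam) * x (lam * η) -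
            lam * v (lam * η) * (v (lam * η) * lam)) / x (lam * η) ^ 2 =
          -(lam * v (lam * η) / x (lam * η)) ^ 2 -
            b * (lam * v (lam * η) / x (lam * η)) -
            lam ^ 2 * x (lam * η) ^ q := by
        rw [hxn, ← hεlam]
        field_simp
        ring
      rw [heq] at hYd
      exact hYd
    · -- W' = qYW
      have houter : HasDerivAt (fun y : ℝ => y ^ q)
          (q * (x (lam * η)) ^ (q - 1)) (x (lam * η)) :=
        Real.hasDerivAt_rpow_const (Or.inl hxne)
      have hWc : HasDerivAt (fun η' => (x (lam * η')) ^ q)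
          (q * (x (lam * η)) ^ (q - 1) * (v (lam * η) * lam)) η := by have := houter.comp η hXc; exact this
      have hW : HasDerivAt (fun η' => lam^2 * (x (lam * η')) ^ q)
          (lam^2 * (q * (x (lam * η)) ^ (q - 1) * (v (lam * η) * lam))) η :=
        hWc.const_mul (lam^2)
      have heq : lam^2 * (q * (x (lam * η)) ^ (q - 1) * (v (lam * η) * lam)) =
          q * (lam * v (lam * η) / x (lam * η)) * (lam^2 * (x (lam * η)) ^ q) := by
        rw [← hxq]
        field_simp
      rw [heq] at hW
      exact hW
    · exact mul_pos (pow_pos hlampos 2) (Real.rpow_pos_of_pos hx1 q)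
  · -- Y → +∞ at ηm
    rw [comap_coe_nhdsWithin_Ioi]
    have hinner : Tendsto (fun η : ℝ => lam * η) (𝓝[>] (0:ℝ)) (𝓝 0) := by
      have : Tendsto (fun η : ℝ => lam * η) (𝓝 (0:ℝ)) (𝓝 (lam * 0)) :=
        (continuous_const.mul continuous_id).tendsto 0
      rw [mul_zero] at this
      exact this.mono_left nhdsWithin_le_nhds
    have hvc : Tendsto (fun η : ℝ => v (lam * η)) (𝓝[>] (0:ℝ)) (𝓝 1) := by
      have hc : ContinuousAt v 0 := (hdv 0 ⟨le_rfl, hTpos.le⟩).continuousAt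
      have := hc.tendsto.comp hinner
      rwa [hv0] at this
    have hxc : Tendsto (fun η : ℝ => x (lam * η)) (𝓝[>] (0:ℝ)) (𝓝[>] (0:ℝ)) := by
      rw [tendsto_nhdsWithin_iff]
      constructor
      · have hc : ContinuousAt x 0 := (hdx 0 ⟨le_rfl, hTpos.le⟩).continuousAt
        have := hc.tendsto.comp hinner
        rwa [hx0] at this
      · filter_upwards [Ioo_mem_nhdsGT_of_mem
          (⟨le_rfl, hηppos⟩ : (0:ℝ) ∈ Set.Ico 0 (T₀/lam))] with η hη
        have ht0 : 0 < lam * η := mul_pos hlampos hη.1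
        have htT₀ : lam * η < T₀ := by
          rw [mul_comm]
          exact (lt_div_iff₀ hlampos).1 hη.2
        exact (hbounds (lam * η) ht0 htT₀).1
    have hinv : Tendsto (fun η : ℝ => (x (lam * η))⁻¹) (𝓝[>] (0:ℝ)) atTop :=
      tendsto_inv_nhdsGT_zero.comp hxc
    have hmain : Tendsto (fun η : ℝ => (lam * v (lam * η)) * (x (lam * η))⁻¹)
        (𝓝[>] (0:ℝ)) atTop := by
      apply Filter.Tendsto.pos_mul_atTop hlampos _ hinv
      have := hvc.const_mul lam
      rwa [mul_one] at this
    exact hmain.congr (fun η => (div_eq_mul_inv _ _).symm)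
  · -- Y → -∞ at ηp
    rw [comap_coe_nhdsWithin_Iio]
    have hlamT₀ : lam * (T₀ / lam) = T₀ := by field_simp
    have hinner : Tendsto (fun η : ℝ => lam * η) (𝓝[<] (T₀/lam)) (𝓝 T₀) := by
      have : Tendsto (fun η : ℝ => lam * η) (𝓝 (T₀/lam)) (𝓝 (lam * (T₀/lam))) :=
        (continuous_const.mul continuous_id).tendsto _
      rw [hlamT₀] at this
      exact this.mono_left nhdsWithin_le_nhds
    have hT₀Icc : T₀ ∈ Set.Icc 0 T := ⟨hT₀pos.le, hT₀T⟩
    have hvc : Tendsto (fun η : ℝ => v (lam * η)) (𝓝[<] (T₀/lam)) (𝓝 (v T₀)) :=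
      ((hdv T₀ hT₀Icc).continuousAt).tendsto.comp hinner
    have hxc : Tendsto (fun η : ℝ => x (lam * η)) (𝓝[<] (T₀/lam)) (𝓝[>] (0:ℝ)) := by
      rw [tendsto_nhdsWithin_iff]
      constructor
      · have := ((hdx T₀ hT₀Icc).continuousAt).tendsto.comp hinner
        rwa [hxT₀] at this
      · filter_upwards [Ioo_mem_nhdsLT_of_mem
          (⟨hηppos, le_rfl⟩ : T₀/lam ∈ Set.Ioc 0 (T₀/lam))] with η hη
        have ht0 : 0 < lam * η := mul_pos hlampos hη.1
        have htT₀ : lam * η < T₀ := by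
          rw [mul_comm]
          exact (lt_div_iff₀ hlampos).1 hη.2
        exact (hbounds (lam * η) ht0 htT₀).1
    have hinv : Tendsto (fun η : ℝ => (x (lam * η))⁻¹) (𝓝[<] (T₀/lam)) atTop :=
      tendsto_inv_nhdsGT_zero.comp hxc
    have hC : lam * v T₀ < 0 := mul_neg_of_pos_of_neg hlampos hvT₀
    have hmain : Tendsto (fun η : ℝ => (lam * v (lam * η)) * (x (lam * η))⁻¹)
        (𝓝[<] (T₀/lam)) atBot :=
      Filter.Tendsto.neg_mul_atTop hC (hvc.const_mul lam) hinv
    exact hmain.congr (fun η => (div_eq_mul_inv _ _).symm)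
end
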